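/- Zero curvature representation of the shifted ratio equation: let z0, z1, z2, z3, α1, α2, λ ∈ ℂ with α1 ≠ 0, α2 ≠ 0 and z0 − z1 ± α1, z1 − z2 ± α2, z2 − z3 ± α1, z3 − z0 ± α2 all nonzero. Define the 2×2 complex matrix L(z, w, α, λ) := [[1, w − z + α], [λα/(w − z − α), (w − z + α)/(w − z − α)]]. If ((z0 − z1 + α1)(z2 − z3 + α1))/((z1 − z2 − α2)(z3 − z0 − α2)) = α1/α2, then L(z2, z1, α2, λ) · L(z1, z0, α1, λ) = L(z2, z3, α1, λ) · L(z3, z0, α2, λ). -/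

import Mathlib

open Matrix

/-- Transition matrix of the shifted ratio system. -/
noncomputable def srL (z w α lam : ℂ) : Matrix (Fin 2) (Fin 2) ℂ :=
  !![1, w - z + α;
     lam * α / (w - z - α), (w - z + α) / (w - z - α)]

theorem shifted_ratio_zero_curvature
    (z0 z1 z2 z3 α1 α2 lam : ℂ)
    (hα1 : α1 ≠ 0) (hα2 : α2 ≠ 0)
    (h1p : z0 - z1 + α1 ≠ 0) (h1m : z0 - z1 - α1 ≠ 0)
    (h2p : z1 - z2 + α2 ≠ 0) (h2m : z1 - z2 - α2 ≠ 0)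
    (h3p : z2 - z3 + α1 ≠ 0) (h3m : z2 - z3 - α1 ≠ 0)
    (h4p : z3 - z0 + α2 ≠ 0) (h4m : z3 - z0 - α2 ≠ 0)
    (hsr : (z0 - z1 + α1) * (z2 - z3 + α1) /
        ((z1 - z2 - α2) * (z3 - z0 - α2)) = α1 / α2) :
    srL z2 z1 α2 lam * srL z1 z0 α1 lam =
      srL z2 z3 α1 lam * srL z3 z0 α2 lam := by
  have hB : (z1 - z2 - α2) * (z3 - z0 - α2) ≠ 0 := mul_ne_zero h2m h4m
  have hsr' : (z0 - z1 + α1) * (z2 - z3 + α1) * α2 =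
      α1 * ((z1 - z2 - α2) * (z3 - z0 - α2)) :=
    (div_eq_div_iff hB hα2).mp hsr
  have h3p' : z3 - z2 - α1 ≠ 0 := fun h => h3p (by linear_combination -h)
  have h3m' : z3 - z2 + α1 ≠ 0 := fun h => h3m (by linear_combination -h)
  have h4p' : z0 - z3 - α2 ≠ 0 := fun h => h4p (by linear_combination -h)
  have h4m' : z0 - z3 + α2 ≠ 0 := fun h => h4m (by linear_combination -h)
  ext i j
  fin_cases i <;> fin_cases j <;>
    simp only [srL, Matrix.mul_apply, Fin.sum_univ_two, Matrix.cons_val', Matrix.cons_val_zero,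
      Matrix.cons_val_one, Matrix.head_cons, Matrix.empty_val', Matrix.cons_val_fin_one,
      Matrix.head_fin_const, Matrix.of_apply, Fin.zero_eta, Fin.mk_one] <;>
    field_simp
  · linear_combination lam * hsr'
  · linear_combination 2 * hsr'
  · linear_combination
      lam * (z3 - z2 + z1 - z0) * hsr'
  · linear_combination
      1 *
        (2 * (z3 - z2 + z1 - z0) - lam * (z0 - z3 - α2) * (z0 - z1 - α1)) * hsr'
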